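/- Let p be a strongly summable ultrafilter on an abelian group G such that FS(x) ∈ p for some sequence x : ℕ → G satisfying the 2-uniqueness of finite sums. Then p is additively isomorphic to a union ultrafilter; in fact the map φ given by φ(∑_{n∈a} x_n) = a sends p to a union ultrafilter. -/

import Mathlib

open scoped BigOperators

/-- The set of finite sums of a sequence `x : ℕ → G`. -/
def FS {G : Type*} [AddCommGroup G] (x : ℕ → G) : Set G :=
  {g | ∃ a : Finset ℕ, a.Nonempty ∧ g = ∑ n ∈ a, x n}

/-- An ultrafilter `p` on `G` is strongly summable if every `A ∈ p` contains an
FS-set (of a sequence with infinite range) belonging to `p`. -/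
def StronglySummable {G : Type*} [AddCommGroup G] (p : Ultrafilter G) : Prop :=
  ∀ A ∈ p, ∃ x : ℕ → G, (Set.range x).Infinite ∧ FS x ∈ p ∧ FS x ⊆ A

/-- A sequence satisfies uniqueness of finite sums if equal finite sums have equal
index sets. -/
def UniqFS {G : Type*} [AddCommGroup G] (x : ℕ → G) : Prop :=
  ∀ a b : Finset ℕ, ∑ n ∈ a, x n = ∑ n ∈ b, x n → a = b

/-- A sequence `x` satisfies the 2-uniqueness of finite sums if whenever two finite
sums with coefficients in `{1, 2}` agree, the index sets and the coefficient functions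
agree. -/
def TwoUniqFS {G : Type*} [AddCommGroup G] (x : ℕ → G) : Prop :=
  ∀ (a b : Finset ℕ) (ε δ : ℕ → ℕ),
    (∀ n ∈ a, ε n = 1 ∨ ε n = 2) → (∀ n ∈ b, δ n = 1 ∨ δ n = 2) →
    ∑ n ∈ a, ε n • x n = ∑ n ∈ b, δ n • x n →
    a = b ∧ ∀ n ∈ a, ε n = δ n

/-- The set of finite unions of a family `X` of finite subsets of `ℕ`. -/
def FU (X : Set (Finset ℕ)) : Set (Finset ℕ) :=
  {s | ∃ a : Finset (Finset ℕ), a.Nonempty ∧ ↑a ⊆ X ∧ s = a.sup id}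

/-- A union ultrafilter: every member contains an FU-set, of a pairwise disjoint family,
belonging to the ultrafilter. -/
def IsUnionUltrafilter (q : Ultrafilter (Finset ℕ)) : Prop :=
  ∀ A ∈ q, ∃ X : Set (Finset ℕ), X.PairwiseDisjoint id ∧ FU X ∈ q ∧ FU X ⊆ A

/-- `p` is additively isomorphic to `q`: there are a sequence `x` satisfying uniqueness
of finite sums with `FS x ∈ p` and a pairwise disjoint family `y` of finite subsets of `ℕ`
such that the map `∑_{n ∈ a} x n ↦ ⋃_{n ∈ a} y n` sends `p` to `q`. -/
def AddIsoToUnion {G : Type*} [AddCommGroup G] (p : Ultrafilter G)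
    (q : Ultrafilter (Finset ℕ)) : Prop :=
  ∃ (x : ℕ → G) (y : ℕ → Finset ℕ) (φ : G → Finset ℕ),
    UniqFS x ∧ FS x ∈ p ∧
    (Pairwise fun m n => Disjoint (y m) (y n)) ∧
    (∀ a : Finset ℕ, a.Nonempty → φ (∑ n ∈ a, x n) = a.biUnion y) ∧
    Ultrafilter.map φ p = q

lemma uniqFS_of_twoUniqFS {G : Type*} [AddCommGroup G] {x : ℕ → G} (hx : TwoUniqFS x) :
    UniqFS x := by
  intro a b h
  refine (hx a b (fun _ => 1) (fun _ => 1) (fun n _ => Or.inl rfl) (fun n _ => Or.inl rfl) ?_).1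
  simpa using h

lemma key_unionUltrafilter {G : Type*} [AddCommGroup G] (p : Ultrafilter G)
    (hss : StronglySummable p) (x : ℕ → G) (hx : TwoUniqFS x) (hFS : FS x ∈ p)
    (φ : G → Finset ℕ) (hφ : ∀ a : Finset ℕ, φ (∑ n ∈ a, x n) = a) :
    IsUnionUltrafilter (Ultrafilter.map φ p) := by
  intro A hA
  have hB : (φ ⁻¹' A ∩ FS x) ∈ p :=
    Filter.inter_mem (Ultrafilter.mem_map.mp hA) hFS
  obtain ⟨y, hyinf, hFSy, hsub⟩ := hss _ hB
  have hy : ∀ n, ∃ c : Finset ℕ, c.Nonempty ∧ y n = ∑ m ∈ c, x m := by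
    intro n
    exact (hsub ⟨{n}, Finset.singleton_nonempty n, by simp⟩).2
  choose a hane ha using hy
  have hdisj : ∀ m n, m ≠ n → Disjoint (a m) (a n) := by
    intro m n hmn
    have hmem : y m + y n ∈ FS y :=
      ⟨{m, n}, by simp, by rw [Finset.sum_pair hmn]⟩
    obtain ⟨c, -, hc⟩ := (hsub hmem).2
    have hterm : ∀ k, (if k ∈ a m ∩ a n then 2 else 1) • x k
        = x k + (if k ∈ a m ∩ a n then x k else 0) := by
      intro k
      by_cases hk : k ∈ a m ∩ a n
      · rw [if_pos hk, if_pos hk, two_nsmul]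
      · rw [if_neg hk, if_neg hk, one_nsmul, add_zero]
    have hsum : ∑ k ∈ a m ∪ a n, (if k ∈ a m ∩ a n then 2 else 1) • x k
        = ∑ k ∈ c, (fun _ => 1 : ℕ → ℕ) k • x k := by
      calc ∑ k ∈ a m ∪ a n, (if k ∈ a m ∩ a n then 2 else 1) • x k
          = ∑ k ∈ a m ∪ a n, (x k + if k ∈ a m ∩ a n then x k else 0) := by
            exact Finset.sum_congr rfl fun k _ => hterm k
        _ = ∑ k ∈ a m ∪ a n, x k + ∑ k ∈ (a m ∪ a n) ∩ (a m ∩ a n), x k := by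
            rw [Finset.sum_add_distrib, Finset.sum_ite_mem]
        _ = ∑ k ∈ a m ∪ a n, x k + ∑ k ∈ a m ∩ a n, x k := by
            rw [Finset.inter_eq_right.mpr
              (Finset.inter_subset_left.trans Finset.subset_union_left)]
        _ = ∑ k ∈ a m, x k + ∑ k ∈ a n, x k := Finset.sum_union_inter
        _ = y m + y n := by rw [ha m, ha n]
        _ = ∑ k ∈ c, x k := hc
        _ = ∑ k ∈ c, (fun _ => 1 : ℕ → ℕ) k • x k := by simp
    have hres := hx (a m ∪ a n) c (fun k => if k ∈ a m ∩ a n then 2 else 1) (fun _ => 1)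
      (fun k _ => by
        by_cases hk : k ∈ a m ∩ a n
        · exact Or.inr (if_pos hk)
        · exact Or.inl (if_neg hk))
      (fun k _ => Or.inl rfl) hsum
    rw [Finset.disjoint_left]
    intro k hkm hkn
    have hk1 := hres.2 k (Finset.mem_union_left _ hkm)
    simp only [if_pos (Finset.mem_inter.mpr ⟨hkm, hkn⟩)] at hk1
    exact absurd hk1 (by norm_num)
  have hbsum : ∀ b : Finset ℕ, ∑ n ∈ b, y n = ∑ m ∈ b.biUnion a, x m := by
    intro b
    rw [Finset.sum_biUnion (fun m _ n _ hmn => hdisj m n hmn)]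
    exact Finset.sum_congr rfl fun n _ => ha n
  refine ⟨Set.range a, ?_, ?_, ?_⟩
  · rintro u ⟨m, rfl⟩ v ⟨n, rfl⟩ huv
    exact hdisj m n (fun h => huv (by rw [h]))
  · rw [Ultrafilter.mem_map]
    refine Filter.mem_of_superset hFSy ?_
    rintro g ⟨b, hb, rfl⟩
    show φ (∑ n ∈ b, y n) ∈ FU (Set.range a)
    rw [hbsum, hφ]
    refine ⟨b.image a, hb.image a, ?_, ?_⟩
    · intro u hu
      simp only [Finset.coe_image, Set.mem_image, Finset.mem_coe] at hu
      obtain ⟨n, -, rfl⟩ := hu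
      exact Set.mem_range_self n
    · rw [Finset.sup_image, Finset.sup_eq_biUnion]
      rfl
  · rintro s ⟨F, hFne, hFX, rfl⟩
    have hex : ∀ e ∈ F, ∃ n, a n = e := fun e he => hFX he
    choose! g hg using hex
    set b : Finset ℕ := F.image g with hbdef
    have himg : b.image a = F := by
      ext e
      simp only [hbdef, Finset.mem_image]
      constructor
      · rintro ⟨n, ⟨e', he', rfl⟩, rfl⟩
        rw [hg e' he']; exact he'
      · intro he; exact ⟨g e, ⟨e, he, rfl⟩, hg e he⟩
    have hbne : b.Nonempty := hFne.image g
    have hsup : F.sup id = b.biUnion a := by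
      rw [← himg, Finset.sup_image, Finset.sup_eq_biUnion]
      rfl
    rw [hsup, ← hφ (b.biUnion a), ← hbsum b]
    exact (hsub ⟨b, hbne, rfl⟩).1

/-- If `p` is a strongly summable ultrafilter on an abelian group `G` and `FS x ∈ p`
for some sequence `x` satisfying the 2-uniqueness of finite sums, then `p` is additively
isomorphic to a union ultrafilter; in fact the map `φ` given by `φ(∑_{n ∈ a} x n) = a`
sends `p` to a union ultrafilter. -/
theorem addIsoToUnion_of_twoUniqFS {G : Type*} [AddCommGroup G]
    (p : Ultrafilter G) (hss : StronglySummable p)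
    (x : ℕ → G) (hx : TwoUniqFS x) (hFS : FS x ∈ p) :
    (∃ q : Ultrafilter (Finset ℕ), IsUnionUltrafilter q ∧ AddIsoToUnion p q) ∧
    ∀ φ : G → Finset ℕ, (∀ a : Finset ℕ, φ (∑ n ∈ a, x n) = a) →
      IsUnionUltrafilter (Ultrafilter.map φ p) := by
  classical
  have huniq : UniqFS x := uniqFS_of_twoUniqFS hx
  constructor
  · set φ : G → Finset ℕ :=
      fun g => if h : ∃ a : Finset ℕ, g = ∑ n ∈ a, x n then h.choose else ∅ with hφdef
    have hφ : ∀ a : Finset ℕ, φ (∑ n ∈ a, x n) = a := by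
      intro a
      have h : ∃ b : Finset ℕ, (∑ n ∈ a, x n) = ∑ n ∈ b, x n := ⟨a, rfl⟩
      rw [hφdef]
      simp only [dif_pos h]
      exact (huniq a h.choose h.choose_spec).symm
    refine ⟨Ultrafilter.map φ p, key_unionUltrafilter p hss x hx hFS φ hφ,
      x, (fun n => {n}), φ, huniq, hFS, ?_, ?_, rfl⟩
    · intro m n hmn
      simp [Ne.symm hmn, hmn]
    · intro b _
      rw [hφ b]
      exact (Finset.biUnion_singleton_eq_self).symm
  · exact fun φ hφ => key_unionUltrafilter p hss x hx hFS φ hφ
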